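/- Let L be a full lattice in a finite-dimensional real vector space V, W ⊆ V a subspace, P: V → V/W the quotient map, 𝔏 the closure of P(L) in V/W, and K the connected component of 𝔏 containing 0. Then K is a vector subspace of V/W and the preimage Ŵ = P⁻¹(K) is an L-generated subspace of V containing W. -/

import Mathlib

open Submodule Module Set Metric Filter Topology

section Helpers

set_option linter.unusedSectionVars false

variable {E : Type*} [NormedAddCommGroup E] [NormedSpace ℝ E] [FiniteDimensional ℝ E]

lemma discrete_of_eps (A : Submodule ℤ E) {ε : ℝ} (hε : 0 < ε)
    (h : ∀ a ∈ A, ‖a‖ < ε → a = 0) : DiscreteTopology A := by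
  refine discreteTopology_iff_isOpen_singleton_zero.mpr ?_
  refine Metric.isOpen_iff.mpr fun x hx => ?_
  rcases hx with rfl
  refine ⟨ε, hε, fun y hy => ?_⟩
  have hy' : ‖(y : E)‖ < ε := by
    simpa [dist_eq_norm] using hy
  have := h y y.2 hy'
  exact Subtype.ext this

lemma eps_of_discrete (A : Submodule ℤ E) [DiscreteTopology A] :
    ∃ ε > 0, ∀ a ∈ A, ‖a‖ < ε → a = 0 := by
  have hop : IsOpen ({0} : Set A) := isOpen_discrete _
  rcases Metric.isOpen_iff.mp hop 0 rfl with ⟨ε, hε, hball⟩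
  refine ⟨ε, hε, fun a ha hn => ?_⟩
  have : (⟨a, ha⟩ : A) ∈ Metric.ball (0 : A) ε := by
    simpa [dist_eq_norm] using hn
  simpa [Subtype.ext_iff] using hball this

lemma finrank_eq_finrank_span_of_discrete (A : Submodule ℤ E) [DiscreteTopology A] :
    Module.finrank ℤ A = Module.finrank ℝ (span ℝ (A : Set E)) := by
  set S : Submodule ℝ E := span ℝ (A : Set E) with hS
  have hAS : (A : Set E) ⊆ (S : Set E) := Submodule.subset_span
  set A₀ : Submodule ℤ S := A.comap ((S.subtype).restrictScalars ℤ) with hA₀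
  obtain ⟨ε, hε, hsep⟩ := eps_of_discrete A
  haveI : DiscreteTopology A₀ := by
    refine discrete_of_eps A₀ hε (fun a ha hn => ?_)
    have h0 : ((a : S) : E) = 0 := hsep _ ha hn
    apply Subtype.ext
    simpa using h0
  haveI : IsZLattice ℝ A₀ := by
    constructor
    apply Submodule.map_injective_of_injective S.injective_subtype
    have himg : S.subtype '' (A₀ : Set S) = (A : Set E) := by
      ext y
      constructor
      · rintro ⟨x, hx, rfl⟩; exact hx
      · intro hy; exact ⟨⟨y, hAS hy⟩, hy, rfl⟩
    rw [Submodule.map_span, himg, Submodule.map_top, Submodule.range_subtype]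
  have hrank := ZLattice.rank ℝ A₀
  have e : A ≃ₗ[ℤ] A₀ :=
    AddEquiv.toIntLinearEquiv
      { toFun := fun a => ⟨⟨(a : E), hAS a.2⟩, a.2⟩
        invFun := fun x => ⟨((x : S) : E), x.2⟩
        left_inv := fun a => rfl
        right_inv := fun x => rfl
        map_add' := fun a b => rfl }
  rw [e.finrank_eq, hrank]

end Helpers

set_option maxHeartbeats 2000000 in
/-- Construction of the L-closure: with P : V → V/W the quotient map, 𝔏 the closure of
P(L), and K the identity component of 𝔏, K is a vector subspace of V/W and
Ŵ = P⁻¹(K) is an L-generated subspace of V containing W. -/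
theorem stmt_12 {V : Type*} [NormedAddCommGroup V] [NormedSpace ℝ V]
    [FiniteDimensional ℝ V] (L : AddSubgroup V)
    (hL : ∃ b : Basis (Fin (Module.finrank ℝ V)) ℝ V,
      AddSubgroup.closure (Set.range ⇑b) = L)
    (W : Submodule ℝ V) :
    ∃ K : Submodule ℝ (V ⧸ W),
      (K : Set (V ⧸ W)) = connectedComponentIn (closure (⇑W.mkQ '' (L : Set V))) 0 ∧
      ∃ What : Submodule ℝ V,
        (What : Set V) = ⇑W.mkQ ⁻¹' (K : Set (V ⧸ W)) ∧
        Submodule.span ℝ ((What : Set V) ∩ (L : Set V)) = What ∧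
        W ≤ What := by
  classical
  obtain ⟨b, hb⟩ := hL
  haveI : IsClosed (W : Set V) := W.closed_of_finiteDimensional
  have hbL : Set.range ⇑b ⊆ (L : Set V) := hb ▸ AddSubgroup.subset_closure
  set Lz : Submodule ℤ V := Submodule.span ℤ (Set.range ⇑b) with hLz
  have hLzL : (Lz : Set V) = (L : Set V) := by
    have h1 : Lz.toAddSubgroup = L := by
      rw [hLz, Submodule.span_int_eq_addSubgroupClosure, hb]
    exact congrArg (fun s : AddSubgroup V => (s : Set V)) h1
  haveI hdLz : DiscreteTopology Lz :=
    inferInstanceAs (DiscreteTopology (span ℤ (Set.range ⇑b)))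
  set P := W.mkQ with hP
  set GA : AddSubgroup (V ⧸ W) := (L.map P.toAddMonoidHom).topologicalClosure with hGA
  have hGAcoe : (GA : Set (V ⧸ W)) = closure (⇑P '' (L : Set V)) := by
    rw [hGA, AddSubgroup.topologicalClosure_coe, AddSubgroup.coe_map,
      LinearMap.toAddMonoidHom_coe]
  have hGclosed : IsClosed (GA : Set (V ⧸ W)) := AddSubgroup.isClosed_topologicalClosure _
  have hPL : ∀ l ∈ L, P l ∈ GA := fun l hl =>
    (AddSubgroup.le_topologicalClosure _) (AddSubgroup.mem_map_of_mem _ hl)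
  -- the subspace U of directions contained in GA
  set U : Submodule ℝ (V ⧸ W) :=
    { carrier := {x | ∀ t : ℝ, t • x ∈ GA}
      add_mem' := fun hx hy t => by
        rw [smul_add]; exact add_mem (hx t) (hy t)
      zero_mem' := fun t => by simpa using zero_mem GA
      smul_mem' := fun c x hx t => by
        rw [smul_smul]; exact hx (t * c) } with hU
  have hUmem : ∀ x : V ⧸ W, x ∈ U ↔ ∀ t : ℝ, t • x ∈ GA := fun _ => Iff.rfl
  have hUG : (U : Set (V ⧸ W)) ⊆ (GA : Set (V ⧸ W)) := fun x hx => by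
    have := ((hUmem x).mp hx) 1
    simpa using this
  obtain ⟨U', hcompl⟩ := Submodule.exists_isCompl U
  have claim1 : ∃ ε > 0, ∀ g : V ⧸ W, g ∈ GA → g ∈ U' → ‖g‖ < ε → g = 0 := by
    by_contra hcon
    push_neg at hcon
    choose d hd1 hd2 hd3 hd4 using fun k : ℕ => hcon (1 / ((k : ℝ) + 1)) (by positivity)
    have hnorm_pos : ∀ k, (0 : ℝ) < ‖d k‖ := fun k => norm_pos_iff.mpr (hd4 k)
    set v : ℕ → V ⧸ W := fun k => ‖d k‖⁻¹ • d k with hv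
    have hvmem : ∀ k, v k ∈ Metric.sphere (0 : V ⧸ W) 1 ∩ (U' : Set (V ⧸ W)) := by
      intro k
      refine ⟨?_, U'.smul_mem _ (hd2 k)⟩
      simp only [mem_sphere_iff_norm, sub_zero, hv, norm_smul, norm_inv, norm_norm]
      exact inv_mul_cancel₀ (hnorm_pos k).ne'
    have hcpt : IsCompact (Metric.sphere (0 : V ⧸ W) 1 ∩ (U' : Set (V ⧸ W))) :=
      (isCompact_sphere 0 1).inter_right U'.closed_of_finiteDimensional
    obtain ⟨x, hxmem, φ, hφ, hconv⟩ := hcpt.tendsto_subseq hvmem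
    have hcle : ∀ k, ‖d (φ k)‖ ≤ 1 / ((k : ℝ) + 1) := by
      intro k
      refine le_trans (hd3 (φ k)).le ?_
      have h1 : ((k : ℝ) + 1) ≤ ((φ k : ℝ) + 1) := by
        exact_mod_cast Nat.succ_le_succ hφ.le_apply
      exact one_div_le_one_div_of_le (by positivity) h1
    have hc0 : Tendsto (fun k => ‖d (φ k)‖) atTop (𝓝 0) :=
      squeeze_zero (fun k => norm_nonneg _) hcle tendsto_one_div_add_atTop_nhds_zero_nat
    have hxU : x ∈ U := by
      intro t
      have heq : ∀ k, ((⌊t / ‖d (φ k)‖⌋ : ℤ) • d (φ k)) =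
          (((⌊t / ‖d (φ k)‖⌋ : ℤ) : ℝ) * ‖d (φ k)‖) • v (φ k) := by
        intro k
        rw [hv]
        rw [smul_smul, mul_assoc, mul_inv_cancel₀ (hnorm_pos (φ k)).ne', mul_one]
        exact (Int.cast_smul_eq_zsmul ℝ _ _).symm
      have hscal : Tendsto (fun k => ((⌊t / ‖d (φ k)‖⌋ : ℤ) : ℝ) * ‖d (φ k)‖) atTop (𝓝 t) := by
        rw [tendsto_iff_dist_tendsto_zero]
        simp only [Real.dist_eq]
        refine squeeze_zero (fun k => abs_nonneg _) (fun k => ?_) hc0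
        set c := ‖d (φ k)‖
        have hc := hnorm_pos (φ k)
        have h1 : ((⌊t / c⌋ : ℤ) : ℝ) ≤ t / c := Int.floor_le _
        have h2 : t / c < (⌊t / c⌋ : ℤ) + 1 := Int.lt_floor_add_one _
        have hcanc : t / c * c = t := div_mul_cancel₀ t hc.ne'
        rw [abs_le]
        constructor
        · nlinarith [mul_lt_mul_of_pos_right h2 hc]
        · nlinarith [mul_le_mul_of_nonneg_right h1 hc.le]
      have hlim : Tendsto (fun k => (((⌊t / ‖d (φ k)‖⌋ : ℤ) : ℝ) * ‖d (φ k)‖) • v (φ k))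
          atTop (𝓝 (t • x)) := hscal.smul hconv
      have hmemG : ∀ k, (((⌊t / ‖d (φ k)‖⌋ : ℤ) : ℝ) * ‖d (φ k)‖) • v (φ k) ∈ (GA : Set (V ⧸ W)) := by
        intro k
        rw [← heq k]
        exact zsmul_mem (hd1 (φ k)) _
      have : t • x ∈ closure (GA : Set (V ⧸ W)) :=
        mem_closure_of_tendsto hlim (Filter.Eventually.of_forall hmemG)
      rwa [hGclosed.closure_eq] at this
    have hx0 : x = 0 := Submodule.disjoint_def.mp hcompl.disjoint x hxU hxmem.2
    rw [hx0] at hxmem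
    simpa using hxmem.1
  obtain ⟨ε, hε, hsep⟩ := claim1
  set π₂ := U'.linearProjOfIsCompl U hcompl.symm with hπ₂
  set Tc : (V ⧸ W) →ₗ[ℝ] (V ⧸ W) := U'.subtype ∘ₗ π₂ with hTc
  have hTcU' : ∀ g, Tc g ∈ U' := fun g => (π₂ g).2
  have hTcsub : ∀ g, g - Tc g ∈ U := by
    intro g
    have h1 := Submodule.projection_add_projection_eq_self hcompl g
    have h2 : g - Tc g = (U.linearProjOfIsCompl U' hcompl g : V ⧸ W) := by
      rw [sub_eq_iff_eq_add]; exact h1.symm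
    rw [h2]
    exact (U.linearProjOfIsCompl U' hcompl g).2
  have hTczero : ∀ g, Tc g = 0 ↔ g ∈ U := by
    intro g
    constructor
    · intro h
      have := hTcsub g
      rwa [h, sub_zero] at this
    · intro h
      have : π₂ g = 0 := (Submodule.linearProjOfIsCompl_apply_eq_zero_iff hcompl.symm).mpr h
      simp [hTc, this]
  set Tcl := LinearMap.toContinuousLinearMap Tc with hTcl
  have hTbound : ∀ g, ‖Tc g‖ ≤ ‖Tcl‖ * ‖g‖ := fun g => Tcl.le_opNorm g
  set δ := ε / (‖Tcl‖ + 1) with hδ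
  have hδpos : 0 < δ := div_pos hε (by positivity)
  have claim2 : ∀ g, g ∈ GA → ‖g‖ < δ → g ∈ U := by
    intro g hg hn
    have h1 : Tc g ∈ GA := by
      have he : Tc g = g - (g - Tc g) := (sub_sub_cancel g (Tc g)).symm
      rw [he]
      exact sub_mem hg (hUG (hTcsub g))
    have h2 : ‖Tc g‖ < ε := by
      refine lt_of_le_of_lt (hTbound g) ?_
      have hb1 : ‖Tcl‖ * ‖g‖ ≤ (‖Tcl‖ + 1) * ‖g‖ := by nlinarith [norm_nonneg g]
      have hb2 : (‖Tcl‖ + 1) * ‖g‖ < (‖Tcl‖ + 1) * δ :=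
        mul_lt_mul_of_pos_left hn (by positivity)
      have hb3 : (‖Tcl‖ + 1) * δ = ε := by
        rw [hδ]; field_simp
      linarith
    exact (hTczero g).mp (hsep (Tc g) h1 (hTcU' g) h2)
  have hUclosed : IsClosed (U : Set (V ⧸ W)) := U.closed_of_finiteDimensional
  have h0GA : (0 : V ⧸ W) ∈ (GA : Set (V ⧸ W)) := zero_mem GA
  have hKeq : (U : Set (V ⧸ W)) = connectedComponentIn (GA : Set (V ⧸ W)) 0 := by
    apply Set.Subset.antisymm
    · exact (U.convex.isPreconnected).subset_connectedComponentIn U.zero_mem hUG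
    · intro y hy
      by_contra hyU
      set s := connectedComponentIn (GA : Set (V ⧸ W)) 0 with hs
      have hsG : s ⊆ (GA : Set (V ⧸ W)) := connectedComponentIn_subset _ _
      set O₁ : Set (V ⧸ W) := ⋃ u ∈ (U : Set (V ⧸ W)), Metric.ball u δ with hO₁
      have hO₁open : IsOpen O₁ := isOpen_biUnion fun _ _ => Metric.isOpen_ball
      have hO₂open : IsOpen ((U : Set (V ⧸ W))ᶜ) := hUclosed.isOpen_compl
      have hcover : s ⊆ O₁ ∪ (U : Set (V ⧸ W))ᶜ := by
        intro z hz
        by_cases hzU : z ∈ (U : Set (V ⧸ W))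
        · exact Or.inl (Set.mem_biUnion hzU (Metric.mem_ball_self hδpos))
        · exact Or.inr hzU
      have h1 : (s ∩ O₁).Nonempty :=
        ⟨0, mem_connectedComponentIn h0GA,
          Set.mem_biUnion U.zero_mem (Metric.mem_ball_self hδpos)⟩
      have h2 : (s ∩ (U : Set (V ⧸ W))ᶜ).Nonempty := ⟨y, hy, hyU⟩
      obtain ⟨z, hzs, hzO₁, hzO₂⟩ :=
        isPreconnected_connectedComponentIn O₁ ((U : Set (V ⧸ W))ᶜ) hO₁open hO₂open hcover h1 h2
      obtain ⟨u, huU, hzu⟩ := Set.mem_iUnion₂.mp hzO₁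
      have hzG : z ∈ GA := hsG hzs
      have hsubmem : z - u ∈ GA := sub_mem hzG (hUG huU)
      have hnorm : ‖z - u‖ < δ := by
        rw [← dist_eq_norm]; exact hzu
      have hzuU : z - u ∈ U := claim2 _ hsubmem hnorm
      have hzU : z ∈ U := by
        have := U.add_mem hzuU huU
        simpa using this
      exact hzO₂ hzU
  -- the preimage subspace
  set What : Submodule ℝ V := U.comap P with hWhat
  set T : V →ₗ[ℝ] (V ⧸ W) := Tc ∘ₗ P with hT
  have hTker : ∀ x : V, T x = 0 ↔ x ∈ What := by
    intro x
    rw [hWhat, Submodule.mem_comap]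
    exact hTczero (P x)
  have hkerT : LinearMap.ker T = What :=
    Submodule.ext fun x => (LinearMap.mem_ker).trans (hTker x)
  have hrk1 : finrank ℝ (LinearMap.range T) + finrank ℝ What = finrank ℝ V := by
    rw [← hkerT]
    exact LinearMap.finrank_range_add_finrank_ker T
  -- the intersection lattice
  set Nz : Submodule ℤ V := Lz ⊓ (What.restrictScalars ℤ) with hNz
  haveI hdNz : DiscreteTopology Nz := by
    obtain ⟨ε₁, hε₁, h₁⟩ := eps_of_discrete Lz
    exact discrete_of_eps Nz hε₁ (fun a ha hn => h₁ a (Submodule.mem_inf.mp ha).1 hn)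
  have hNsets : ((What : Set V) ∩ (L : Set V)) = (Nz : Set V) := by
    rw [hNz, Submodule.coe_inf, Submodule.coe_restrictScalars, hLzL, Set.inter_comm]
  have hfrN : finrank ℤ Nz = finrank ℝ (span ℝ (Nz : Set V)) :=
    finrank_eq_finrank_span_of_discrete Nz
  -- the projected lattice
  set ψ : Lz →ₗ[ℤ] (V ⧸ W) := (T.restrictScalars ℤ) ∘ₗ Lz.subtype with hψ
  set Mz : Submodule ℤ (V ⧸ W) := LinearMap.range ψ with hMz
  have hmemL : ∀ l : Lz, (l : V) ∈ L := by
    intro l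
    have : (l : V) ∈ (Lz : Set V) := l.2
    rwa [hLzL] at this
  have hMzsub : ∀ m ∈ Mz, m ∈ GA ∧ m ∈ U' := by
    rintro m ⟨l, rfl⟩
    have hg : P (l : V) ∈ GA := hPL _ (hmemL l)
    constructor
    · have he : ψ l = P (l : V) - (P (l : V) - Tc (P (l : V))) := by
        simp [hψ, hT]
      rw [he]
      exact sub_mem hg (hUG (hTcsub _))
    · exact hTcU' _
  haveI hdMz : DiscreteTopology Mz :=
    discrete_of_eps Mz hε (fun a ha hn => hsep a (hMzsub a ha).1 (hMzsub a ha).2 hn)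
  have hfrM : finrank ℤ Mz = finrank ℝ (span ℝ (Mz : Set (V ⧸ W))) :=
    finrank_eq_finrank_span_of_discrete Mz
  have hMle : span ℝ (Mz : Set (V ⧸ W)) ≤ LinearMap.range T := by
    rw [Submodule.span_le]
    rintro m ⟨l, rfl⟩
    exact ⟨(l : V), rfl⟩
  have hMdim : finrank ℤ Mz ≤ finrank ℝ (LinearMap.range T) := by
    rw [hfrM]
    exact Submodule.finrank_mono hMle
  -- kernel of ψ is Nz
  have hkerψ : ∀ l : Lz, l ∈ LinearMap.ker ψ ↔ (l : V) ∈ Nz := by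
    intro l
    rw [LinearMap.mem_ker, hNz, Submodule.mem_inf]
    constructor
    · intro h
      exact ⟨l.2, (hTker _).mp h⟩
    · intro h
      exact (hTker _).mpr h.2
  have eNk : (LinearMap.ker ψ) ≃ₗ[ℤ] Nz :=
    AddEquiv.toIntLinearEquiv
      { toFun := fun x => ⟨((x : Lz) : V), (hkerψ _).mp x.2⟩
        invFun := fun y => ⟨⟨(y : V), (Submodule.mem_inf.mp y.2).1⟩, (hkerψ _).mpr y.2⟩
        left_inv := fun x => rfl
        right_inv := fun y => rfl
        map_add' := fun x y => rfl }
  -- finiteness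
  haveI hfinLz : Module.Finite ℤ Lz :=
    Module.Finite.iff_fg.mpr (Submodule.fg_span (Set.finite_range ⇑b))
  haveI : Module.Finite ℤ Mz :=
    Module.Finite.of_surjective ψ.rangeRestrict ψ.surjective_rangeRestrict
  haveI : IsNoetherian ℤ Lz := isNoetherian_of_isNoetherianRing_of_finite ℤ Lz
  haveI : Module.Finite ℤ (LinearMap.ker ψ) :=
    Module.Finite.iff_fg.mpr (IsNoetherian.noetherian (LinearMap.ker ψ))
  -- rank-nullity over ℤ
  have hrkZ := LinearMap.rank_range_add_rank_ker ψ
  have hfin : finrank ℤ Mz + finrank ℤ (LinearMap.ker ψ) = finrank ℤ Lz := by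
    have h1 : Module.rank ℤ Mz < Cardinal.aleph0 := Module.rank_lt_aleph0 ℤ Mz
    have h2 : Module.rank ℤ (LinearMap.ker ψ) < Cardinal.aleph0 :=
      Module.rank_lt_aleph0 ℤ (LinearMap.ker ψ)
    have := congrArg Cardinal.toNat hrkZ
    rwa [Cardinal.toNat_add h1 h2] at this
  have hfrL : finrank ℤ Lz = finrank ℝ V := by
    rw [finrank_eq_finrank_span_of_discrete Lz]
    have hsp : span ℝ (Lz : Set V) = ⊤ := by
      apply top_unique
      rw [← b.span_eq]
      exact Submodule.span_mono Submodule.subset_span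
    rw [hsp, finrank_top]
  have hrkNk : finrank ℤ (LinearMap.ker ψ) = finrank ℤ Nz := eNk.finrank_eq
  refine ⟨U, ?_, What, rfl, ?_, ?_⟩
  · rw [← hGAcoe]; exact hKeq
  · have hSle : span ℝ ((What : Set V) ∩ (L : Set V)) ≤ What := by
      rw [Submodule.span_le]
      exact fun x hx => hx.1
    have hdim : finrank ℝ What ≤ finrank ℝ (span ℝ ((What : Set V) ∩ (L : Set V))) := by
      rw [hNsets, ← hfrN, ← hrkNk]
      omega
    exact Submodule.eq_of_le_of_finrank_le hSle hdim
  · intro x hx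
    have hx0 : P x = 0 := by
      rw [hP, Submodule.mkQ_apply]
      exact (Submodule.Quotient.mk_eq_zero W).mpr hx
    have : P x ∈ U := by rw [hx0]; exact U.zero_mem
    exact this
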